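/- arXiv:2109.09834 — 3 statements merged into one kernel-verified Lean document; each statement's English description precedes it below -/
import Mathlib

section
/- Let X₁, X₂, X₃, X₄ be real-valued random variables whose joint distribution is a centered multivariate Gaussian. Then E(X₁X₂X₃X₄) = cov(X₁,X₂)·cov(X₃,X₄) + cov(X₁,X₃)·cov(X₂,X₄) + cov(X₁,X₄)·cov(X₂,X₃). -/
open MeasureTheory ProbabilityTheory Finset

/-- A random vector `X : Ω → Fin n → ℝ` is centered multivariate Gaussian if it is measurable
and every linear combination of its components has a (centered) Gaussian law on `ℝ`. -/
def IsCenteredGaussian {Ω : Type*} [MeasurableSpace Ω] (μ : Measure Ω)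
    {n : ℕ} (X : Ω → Fin n → ℝ) : Prop :=
  Measurable X ∧ ∀ a : Fin n → ℝ, ∃ v : NNReal,
    Measure.map (fun ω => ∑ i, a i * X ω i) μ = gaussianReal 0 v

/-- The covariance `cov(U, V) = E(UV) − E(U)E(V)` of two real random variables. -/
noncomputable def covRV {Ω : Type*} [MeasurableSpace Ω] (μ : Measure Ω)
    (U V : Ω → ℝ) : ℝ :=
  (∫ ω, U ω * V ω ∂μ) - (∫ ω, U ω ∂μ) * (∫ ω, V ω ∂μ)

section GaussAux
open MeasureTheory ProbabilityTheory Finset Real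
open scoped ENNReal NNReal


lemma intJ {b : ℝ} (hb : 0 < b) (n : ℕ) :
    Integrable (fun x : ℝ => x ^ n * Real.exp (-b * x ^ 2)) := by
  have h := integrable_rpow_mul_exp_neg_mul_sq hb (s := (n : ℝ))
    (by exact_mod_cast lt_of_lt_of_le neg_one_lt_zero (Nat.cast_nonneg n))
  simpa [Real.rpow_natCast] using h

lemma recJ {b : ℝ} (hb : 0 < b) (n : ℕ) :
    ∫ x : ℝ, x ^ (n + 2) * Real.exp (-b * x ^ 2) =
      ((n : ℝ) + 1) / (2 * b) * ∫ x : ℝ, x ^ n * Real.exp (-b * x ^ 2) := by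
  set u : ℝ → ℝ := fun x => x ^ (n + 1) with hu_def
  set v : ℝ → ℝ := fun x => Real.exp (-b * x ^ 2) with hv_def
  set u' : ℝ → ℝ := fun x => ((n : ℝ) + 1) * x ^ n with hu'_def
  set v' : ℝ → ℝ := fun x => Real.exp (-b * x ^ 2) * (-b * (2 * x ^ 1)) with hv'_def
  have hu : ∀ x : ℝ, HasDerivAt u (u' x) x := by
    intro x
    have := hasDerivAt_pow (n + 1) x
    simpa [u, u', Nat.add_sub_cancel] using this
  have hv : ∀ x : ℝ, HasDerivAt v (v' x) x := by
    intro x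
    have h1 : HasDerivAt (fun x : ℝ => -b * x ^ 2) (-b * (2 * x ^ 1)) x :=
      (hasDerivAt_pow 2 x).const_mul (-b)
    simpa [v, v'] using h1.exp
  have huv' : Integrable (u * v') := by
    refine ((intJ hb (n + 2)).const_mul (-2 * b)).congr ?_
    filter_upwards with x
    simp only [Pi.mul_apply, u, v']
    ring
  have hu'v : Integrable (u' * v) := by
    refine ((intJ hb n).const_mul ((n : ℝ) + 1)).congr ?_
    filter_upwards with x
    simp only [Pi.mul_apply, u', v]
    ring
  have huv : Integrable (u * v) := by
    refine (intJ hb (n + 1)).congr ?_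
    filter_upwards with x
    simp [Pi.mul_apply, u, v]
  have key := MeasureTheory.integral_mul_deriv_eq_deriv_mul_of_integrable (fun x _ => hu x) (fun x _ => hv x) huv' hu'v huv
  have h1 : ∫ x : ℝ, u x * v' x = (-2 * b) * ∫ x : ℝ, x ^ (n + 2) * Real.exp (-b * x ^ 2) := by
    rw [← MeasureTheory.integral_const_mul]
    congr 1; funext x; simp only [u, v']; ring
  have h2 : ∫ x : ℝ, u' x * v x = ((n : ℝ) + 1) * ∫ x : ℝ, x ^ n * Real.exp (-b * x ^ 2) := by
    rw [← MeasureTheory.integral_const_mul]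
    congr 1; funext x; simp only [u', v]; ring
  rw [h1, h2] at key
  have hb' : (2 : ℝ) * b ≠ 0 := by positivity
  field_simp at key ⊢
  linarith

lemma gauss_integral_eq {v : NNReal} (hv : v ≠ 0) (g : ℝ → ℝ) :
    ∫ x, g x ∂(gaussianReal 0 v) = ∫ x, gaussianPDFReal 0 v x * g x := by
  rw [gaussianReal_of_var_ne_zero _ hv, gaussianPDF_def]
  have h : (fun x => ENNReal.ofReal (gaussianPDFReal 0 v x))
      = fun x => ((gaussianPDFReal 0 v x).toNNReal : ℝ≥0∞) := rfl
  rw [h, integral_withDensity_eq_integral_smul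
    ((measurable_gaussianPDFReal 0 v).real_toNNReal) g]
  congr 1; funext x
  rw [NNReal.smul_def, Real.coe_toNNReal _ (gaussianPDFReal_nonneg 0 v x)]
  rfl

lemma gauss_pdf_eq {v : NNReal} (x : ℝ) :
    gaussianPDFReal 0 v x = (Real.sqrt (2 * π * v))⁻¹ *
      Real.exp (-(2 * (v : ℝ))⁻¹ * x ^ 2) := by
  rw [gaussianPDFReal]
  congr 1
  rw [sub_zero]
  congr 1
  rw [neg_div, neg_mul]
  congr 1
  rw [div_eq_mul_inv, mul_comm]

lemma gauss_int_pow (v : NNReal) (n : ℕ) :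
    Integrable (fun x : ℝ => x ^ n) (gaussianReal 0 v) := by
  by_cases hv : v = 0
  · rw [hv, gaussianReal_zero_var]
    exact (integrable_const ((0 : ℝ) ^ n)).congr (ae_eq_dirac _).symm
  · have hv' : (0 : ℝ) < (v : ℝ) := by positivity
    have hb : (0 : ℝ) < (2 * (v : ℝ))⁻¹ := by positivity
    rw [gaussianReal_of_var_ne_zero _ hv, gaussianPDF_def]
    have h : (fun x => ENNReal.ofReal (gaussianPDFReal 0 v x))
        = fun x => ((gaussianPDFReal 0 v x).toNNReal : ℝ≥0∞) := rfl
    rw [h, integrable_withDensity_iff_integrable_smul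
      ((measurable_gaussianPDFReal 0 v).real_toNNReal)]
    refine ((intJ hb n).const_mul (Real.sqrt (2 * π * v))⁻¹).congr ?_
    filter_upwards with x
    rw [NNReal.smul_def, smul_eq_mul, Real.coe_toNNReal _ (gaussianPDFReal_nonneg 0 v x),
      gauss_pdf_eq]
    ring

lemma gauss_mean (v : NNReal) : ∫ x, x ∂(gaussianReal 0 v) = 0 := by
  by_cases hv : v = 0
  · rw [hv, gaussianReal_zero_var, integral_dirac]
  · rw [gauss_integral_eq hv]
    have h := MeasureTheory.integral_neg_eq_self
      (fun y : ℝ => gaussianPDFReal 0 v y * y) (volume : Measure ℝ)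
    have h2 : (fun x : ℝ => gaussianPDFReal 0 v (-x) * (-x))
        = fun x : ℝ => -(gaussianPDFReal 0 v x * x) := by
      funext x
      rw [gauss_pdf_eq, gauss_pdf_eq]
      simp only [neg_sq]
      ring
    rw [h2, MeasureTheory.integral_neg] at h
    linarith

lemma gauss_four (v : NNReal) :
    ∫ x, x ^ 4 ∂(gaussianReal 0 v) = 3 * (∫ x, x ^ 2 ∂(gaussianReal 0 v)) ^ 2 := by
  by_cases hv : v = 0
  · rw [hv, gaussianReal_zero_var, integral_dirac, integral_dirac]
    norm_num
  · have hv' : (0 : ℝ) < (v : ℝ) := by positivity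
    set b : ℝ := (2 * (v : ℝ))⁻¹ with hb_def
    have hb : (0 : ℝ) < b := by positivity
    set C : ℝ := (Real.sqrt (2 * π * v))⁻¹ with hC_def
    have hmom : ∀ n : ℕ, ∫ x, x ^ n ∂(gaussianReal 0 v)
        = C * ∫ x : ℝ, x ^ n * Real.exp (-b * x ^ 2) := by
      intro n
      rw [gauss_integral_eq hv, ← MeasureTheory.integral_const_mul]
      congr 1; funext x
      rw [gauss_pdf_eq]; ring
    have hone : C * ∫ x : ℝ, x ^ 0 * Real.exp (-b * x ^ 2) = 1 := by
      rw [← integral_gaussianPDFReal_eq_one 0 hv, ← MeasureTheory.integral_const_mul]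
      congr 1; funext x
      rw [gauss_pdf_eq]; ring
    have h2 := recJ hb 0
    have h4 := recJ hb 2
    simp only [Nat.cast_zero, zero_add, Nat.cast_ofNat] at h2 h4
    rw [show (2 + 2 : ℕ) = 4 from rfl] at h4
    rw [show (2 : ℝ) + 1 = 3 by norm_num] at h4
    have hm2 : ∫ x, x ^ 2 ∂(gaussianReal 0 v) = 1 / (2 * b) := by
      rw [hmom 2, h2]
      have : C * (1 / (2 * b) * ∫ x : ℝ, x ^ 0 * Real.exp (-b * x ^ 2))
          = 1 / (2 * b) * (C * ∫ x : ℝ, x ^ 0 * Real.exp (-b * x ^ 2)) := by ring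
      rw [this, hone, mul_one]
    have hm4 : ∫ x, x ^ 4 ∂(gaussianReal 0 v) = 3 / (4 * b ^ 2) := by
      rw [hmom 4, h4, h2]
      have : C * (3 / (2 * b) * (1 / (2 * b) * ∫ x : ℝ, x ^ 0 * Real.exp (-b * x ^ 2)))
          = 3 / (4 * b ^ 2) * (C * ∫ x : ℝ, x ^ 0 * Real.exp (-b * x ^ 2)) := by ring
      rw [this, hone, mul_one]
    rw [hm2, hm4]
    have hbne : b ≠ 0 := ne_of_gt hb
    field_simp
    ring

end GaussAux

lemma lin_facts {Ω : Type*} [MeasurableSpace Ω] (μ : Measure Ω) (X : Ω → Fin 4 → ℝ)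
    (hX : IsCenteredGaussian μ X) (e : Fin 4 → ℝ) :
    (∀ n : ℕ, Integrable (fun ω => (∑ i, e i * X ω i) ^ n) μ) ∧
    (∫ ω, ∑ i, e i * X ω i ∂μ = 0) ∧
    (∫ ω, (∑ i, e i * X ω i) ^ 4 ∂μ = 3 * (∫ ω, (∑ i, e i * X ω i) ^ 2 ∂μ) ^ 2) := by
  obtain ⟨hXm, hXg⟩ := hX
  obtain ⟨v, hv⟩ := hXg e
  have hY : Measurable fun ω => ∑ i, e i * X ω i :=
    Finset.measurable_sum _ fun i _ => ((measurable_pi_apply i).comp hXm).const_mul (e i)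
  have hint : ∀ n : ℕ, Integrable (fun ω => (∑ i, e i * X ω i) ^ n) μ := by
    intro n
    have hg := gauss_int_pow v n
    rw [← hv] at hg
    have hmeas : AEStronglyMeasurable (fun x : ℝ => x ^ n)
        (Measure.map (fun ω => ∑ i, e i * X ω i) μ) :=
      (by fun_prop : Measurable fun x : ℝ => x ^ n).aestronglyMeasurable
    exact (integrable_map_measure hmeas hY.aemeasurable).mp hg
  have hintE : ∀ n : ℕ, ∫ ω, (∑ i, e i * X ω i) ^ n ∂μ = ∫ x, x ^ n ∂(gaussianReal 0 v) := by
    intro n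
    rw [← hv, integral_map hY.aemeasurable (by fun_prop : Measurable fun x : ℝ => x ^ n).aestronglyMeasurable]
  refine ⟨hint, ?_, ?_⟩
  · have h := hintE 1
    simp only [pow_one] at h
    rw [h]
    exact gauss_mean v
  · rw [hintE 4, hintE 2, gauss_four]

/-- **Isserlis' theorem for four variables.** For a centered multivariate Gaussian vector
`(X₁, X₂, X₃, X₄)`,
`E(X₁X₂X₃X₄) = cov(X₁,X₂)cov(X₃,X₄) + cov(X₁,X₃)cov(X₂,X₄) + cov(X₁,X₄)cov(X₂,X₃)`. -/
theorem isserlis_four {Ω : Type*} [MeasurableSpace Ω] (μ : Measure Ω)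
    [IsProbabilityMeasure μ] (X : Ω → Fin 4 → ℝ) (hX : IsCenteredGaussian μ X) :
    ∫ ω, X ω 0 * X ω 1 * X ω 2 * X ω 3 ∂μ =
      covRV μ (fun ω => X ω 0) (fun ω => X ω 1) * covRV μ (fun ω => X ω 2) (fun ω => X ω 3)
    + covRV μ (fun ω => X ω 0) (fun ω => X ω 2) * covRV μ (fun ω => X ω 1) (fun ω => X ω 3)
    + covRV μ (fun ω => X ω 0) (fun ω => X ω 3) * covRV μ (fun ω => X ω 1) (fun ω => X ω 2) := by
  classical
  -- congruence helper
  have intcongr : ∀ f g : Ω → ℝ, (∀ ω, f ω = g ω) → ∫ ω, f ω ∂μ = ∫ ω, g ω ∂μ := by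
    intro f g h
    exact integral_congr_ae (Filter.Eventually.of_forall h)
  -- specialize lin_facts to explicit linear combinations
  have hvec : ∀ a b c d : ℝ, ∀ ω, (∑ i, (![a, b, c, d] : Fin 4 → ℝ) i * X ω i)
      = a * X ω 0 + b * X ω 1 + c * X ω 2 + d * X ω 3 := by
    intro a b c d ω
    simp [Fin.sum_univ_four]
  have hI : ∀ a b c d : ℝ, ∀ n : ℕ,
      Integrable (fun ω => (a * X ω 0 + b * X ω 1 + c * X ω 2 + d * X ω 3) ^ n) μ := by
    intro a b c d n
    refine ((lin_facts μ X hX ![a, b, c, d]).1 n).congr ?_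
    filter_upwards with ω
    rw [hvec]
  have hE0 : ∀ a b c d : ℝ,
      ∫ ω, (a * X ω 0 + b * X ω 1 + c * X ω 2 + d * X ω 3) ∂μ = 0 := by
    intro a b c d
    rw [← (lin_facts μ X hX ![a, b, c, d]).2.1]
    exact intcongr _ _ fun ω => (hvec a b c d ω).symm
  have hE4 : ∀ a b c d : ℝ,
      ∫ ω, (a * X ω 0 + b * X ω 1 + c * X ω 2 + d * X ω 3) ^ 4 ∂μ
        = 3 * (∫ ω, (a * X ω 0 + b * X ω 1 + c * X ω 2 + d * X ω 3) ^ 2 ∂μ) ^ 2 := by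
    intro a b c d
    have h := (lin_facts μ X hX ![a, b, c, d]).2.2
    rw [intcongr _ _ (fun ω => by rw [hvec a b c d ω] :
        ∀ ω, (∑ i, (![a, b, c, d] : Fin 4 → ℝ) i * X ω i) ^ 4
          = (a * X ω 0 + b * X ω 1 + c * X ω 2 + d * X ω 3) ^ 4)] at h
    rw [intcongr _ _ (fun ω => by rw [hvec a b c d ω] :
        ∀ ω, (∑ i, (![a, b, c, d] : Fin 4 → ℝ) i * X ω i) ^ 2
          = (a * X ω 0 + b * X ω 1 + c * X ω 2 + d * X ω 3) ^ 2)] at h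
    exact h
  -- products of linear combinations are integrable
  have hmul : ∀ a b c d a' b' c' d' : ℝ,
      Integrable (fun ω => (a * X ω 0 + b * X ω 1 + c * X ω 2 + d * X ω 3)
        * (a' * X ω 0 + b' * X ω 1 + c' * X ω 2 + d' * X ω 3)) μ := by
    intro a b c d a' b' c' d'
    refine (((hI (a + a') (b + b') (c + c') (d + d') 2).sub
      (hI (a - a') (b - b') (c - c') (d - d') 2)).const_mul (4⁻¹ : ℝ)).congr ?_
    filter_upwards with ω
    simp only [Pi.sub_apply]
    ring
  have p00 : Integrable (fun ω => X ω 0 * X ω 0) μ :=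
    (hmul 1 0 0 0 1 0 0 0).congr (by filter_upwards with ω; ring)
  have p11 : Integrable (fun ω => X ω 1 * X ω 1) μ :=
    (hmul 0 1 0 0 0 1 0 0).congr (by filter_upwards with ω; ring)
  have p22 : Integrable (fun ω => X ω 2 * X ω 2) μ :=
    (hmul 0 0 1 0 0 0 1 0).congr (by filter_upwards with ω; ring)
  have p33 : Integrable (fun ω => X ω 3 * X ω 3) μ :=
    (hmul 0 0 0 1 0 0 0 1).congr (by filter_upwards with ω; ring)
  have p01 : Integrable (fun ω => X ω 0 * X ω 1) μ :=
    (hmul 1 0 0 0 0 1 0 0).congr (by filter_upwards with ω; ring)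
  have p02 : Integrable (fun ω => X ω 0 * X ω 2) μ :=
    (hmul 1 0 0 0 0 0 1 0).congr (by filter_upwards with ω; ring)
  have p03 : Integrable (fun ω => X ω 0 * X ω 3) μ :=
    (hmul 1 0 0 0 0 0 0 1).congr (by filter_upwards with ω; ring)
  have p12 : Integrable (fun ω => X ω 1 * X ω 2) μ :=
    (hmul 0 1 0 0 0 0 1 0).congr (by filter_upwards with ω; ring)
  have p13 : Integrable (fun ω => X ω 1 * X ω 3) μ :=
    (hmul 0 1 0 0 0 0 0 1).congr (by filter_upwards with ω; ring)
  have p23 : Integrable (fun ω => X ω 2 * X ω 3) μ :=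
    (hmul 0 0 1 0 0 0 0 1).congr (by filter_upwards with ω; ring)
  have hsq : ∀ s t u : ℝ,
      ∫ ω, (X ω 0 + s * X ω 1 + t * X ω 2 + u * X ω 3) ^ 2 ∂μ
        = (∫ ω, X ω 0 * X ω 0 ∂μ) + s ^ 2 * (∫ ω, X ω 1 * X ω 1 ∂μ) + t ^ 2 * (∫ ω, X ω 2 * X ω 2 ∂μ) + u ^ 2 * (∫ ω, X ω 3 * X ω 3 ∂μ) + 2 * s * (∫ ω, X ω 0 * X ω 1 ∂μ) + 2 * t * (∫ ω, X ω 0 * X ω 2 ∂μ) + 2 * u * (∫ ω, X ω 0 * X ω 3 ∂μ) + 2 * (s * t) * (∫ ω, X ω 1 * X ω 2 ∂μ) + 2 * (s * u) * (∫ ω, X ω 1 * X ω 3 ∂μ) + 2 * (t * u) * (∫ ω, X ω 2 * X ω 3 ∂μ) := by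
    intro s t u
    have iP1 : Integrable (fun ω => X ω 0 * X ω 0 + s ^ 2 * (X ω 1 * X ω 1)) μ := p00.add (p11.const_mul (s ^ 2))
    have iP2 : Integrable (fun ω => X ω 0 * X ω 0 + s ^ 2 * (X ω 1 * X ω 1) + t ^ 2 * (X ω 2 * X ω 2)) μ := iP1.add (p22.const_mul (t ^ 2))
    have iP3 : Integrable (fun ω => X ω 0 * X ω 0 + s ^ 2 * (X ω 1 * X ω 1) + t ^ 2 * (X ω 2 * X ω 2) + u ^ 2 * (X ω 3 * X ω 3)) μ := iP2.add (p33.const_mul (u ^ 2))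
    have iP4 : Integrable (fun ω => X ω 0 * X ω 0 + s ^ 2 * (X ω 1 * X ω 1) + t ^ 2 * (X ω 2 * X ω 2) + u ^ 2 * (X ω 3 * X ω 3) + 2 * s * (X ω 0 * X ω 1)) μ := iP3.add (p01.const_mul (2 * s))
    have iP5 : Integrable (fun ω => X ω 0 * X ω 0 + s ^ 2 * (X ω 1 * X ω 1) + t ^ 2 * (X ω 2 * X ω 2) + u ^ 2 * (X ω 3 * X ω 3) + 2 * s * (X ω 0 * X ω 1) + 2 * t * (X ω 0 * X ω 2)) μ := iP4.add (p02.const_mul (2 * t))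
    have iP6 : Integrable (fun ω => X ω 0 * X ω 0 + s ^ 2 * (X ω 1 * X ω 1) + t ^ 2 * (X ω 2 * X ω 2) + u ^ 2 * (X ω 3 * X ω 3) + 2 * s * (X ω 0 * X ω 1) + 2 * t * (X ω 0 * X ω 2) + 2 * u * (X ω 0 * X ω 3)) μ := iP5.add (p03.const_mul (2 * u))
    have iP7 : Integrable (fun ω => X ω 0 * X ω 0 + s ^ 2 * (X ω 1 * X ω 1) + t ^ 2 * (X ω 2 * X ω 2) + u ^ 2 * (X ω 3 * X ω 3) + 2 * s * (X ω 0 * X ω 1) + 2 * t * (X ω 0 * X ω 2) + 2 * u * (X ω 0 * X ω 3) + 2 * (s * t) * (X ω 1 * X ω 2)) μ := iP6.add (p12.const_mul (2 * (s * t)))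
    have iP8 : Integrable (fun ω => X ω 0 * X ω 0 + s ^ 2 * (X ω 1 * X ω 1) + t ^ 2 * (X ω 2 * X ω 2) + u ^ 2 * (X ω 3 * X ω 3) + 2 * s * (X ω 0 * X ω 1) + 2 * t * (X ω 0 * X ω 2) + 2 * u * (X ω 0 * X ω 3) + 2 * (s * t) * (X ω 1 * X ω 2) + 2 * (s * u) * (X ω 1 * X ω 3)) μ := iP7.add (p13.const_mul (2 * (s * u)))
    have iP9 : Integrable (fun ω => X ω 0 * X ω 0 + s ^ 2 * (X ω 1 * X ω 1) + t ^ 2 * (X ω 2 * X ω 2) + u ^ 2 * (X ω 3 * X ω 3) + 2 * s * (X ω 0 * X ω 1) + 2 * t * (X ω 0 * X ω 2) + 2 * u * (X ω 0 * X ω 3) + 2 * (s * t) * (X ω 1 * X ω 2) + 2 * (s * u) * (X ω 1 * X ω 3) + 2 * (t * u) * (X ω 2 * X ω 3)) μ := iP8.add (p23.const_mul (2 * (t * u)))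
    rw [show (∫ ω, (X ω 0 + s * X ω 1 + t * X ω 2 + u * X ω 3) ^ 2 ∂μ)
        = ∫ ω, X ω 0 * X ω 0 + s ^ 2 * (X ω 1 * X ω 1) + t ^ 2 * (X ω 2 * X ω 2) + u ^ 2 * (X ω 3 * X ω 3) + 2 * s * (X ω 0 * X ω 1) + 2 * t * (X ω 0 * X ω 2) + 2 * u * (X ω 0 * X ω 3) + 2 * (s * t) * (X ω 1 * X ω 2) + 2 * (s * u) * (X ω 1 * X ω 3) + 2 * (t * u) * (X ω 2 * X ω 3) ∂μ from intcongr _ _ (fun ω => by ring)]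
    rw [integral_add iP8 (p23.const_mul (2 * (t * u))), integral_add iP7 (p13.const_mul (2 * (s * u))), integral_add iP6 (p12.const_mul (2 * (s * t))), integral_add iP5 (p03.const_mul (2 * u)), integral_add iP4 (p02.const_mul (2 * t)), integral_add iP3 (p01.const_mul (2 * s)), integral_add iP2 (p33.const_mul (u ^ 2)), integral_add iP1 (p22.const_mul (t ^ 2)), integral_add p00 (p11.const_mul (s ^ 2))]
    simp only [MeasureTheory.integral_const_mul]
  have hQ : ∀ s t u : ℝ,
      ∫ ω, (X ω 0 + s * X ω 1 + t * X ω 2 + u * X ω 3) ^ 4 ∂μ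
        = 3 * ((∫ ω, X ω 0 * X ω 0 ∂μ) + s ^ 2 * (∫ ω, X ω 1 * X ω 1 ∂μ) + t ^ 2 * (∫ ω, X ω 2 * X ω 2 ∂μ) + u ^ 2 * (∫ ω, X ω 3 * X ω 3 ∂μ) + 2 * s * (∫ ω, X ω 0 * X ω 1 ∂μ) + 2 * t * (∫ ω, X ω 0 * X ω 2 ∂μ) + 2 * u * (∫ ω, X ω 0 * X ω 3 ∂μ) + 2 * (s * t) * (∫ ω, X ω 1 * X ω 2 ∂μ) + 2 * (s * u) * (∫ ω, X ω 1 * X ω 3 ∂μ) + 2 * (t * u) * (∫ ω, X ω 2 * X ω 3 ∂μ)) ^ 2 := by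
    intro s t u
    have h := hE4 1 s t u
    rw [show (∫ ω, (1 * X ω 0 + s * X ω 1 + t * X ω 2 + u * X ω 3) ^ 4 ∂μ)
        = ∫ ω, (X ω 0 + s * X ω 1 + t * X ω 2 + u * X ω 3) ^ 4 ∂μ from
        intcongr _ _ (fun ω => by ring),
      show (∫ ω, (1 * X ω 0 + s * X ω 1 + t * X ω 2 + u * X ω 3) ^ 2 ∂μ)
        = ∫ ω, (X ω 0 + s * X ω 1 + t * X ω 2 + u * X ω 3) ^ 2 ∂μ from
        intcongr _ _ (fun ω => by ring)] at h
    rw [h, hsq s t u]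
  have hm0 : ∫ ω, X ω 0 ∂μ = 0 := by
    have h := hE0 1 0 0 0
    rw [show (∫ ω, (1 * X ω 0 + 0 * X ω 1 + 0 * X ω 2 + 0 * X ω 3) ∂μ)
        = ∫ ω, X ω 0 ∂μ from intcongr _ _ (fun ω => by ring)] at h
    exact h
  have hm1 : ∫ ω, X ω 1 ∂μ = 0 := by
    have h := hE0 0 1 0 0
    rw [show (∫ ω, (0 * X ω 0 + 1 * X ω 1 + 0 * X ω 2 + 0 * X ω 3) ∂μ)
        = ∫ ω, X ω 1 ∂μ from intcongr _ _ (fun ω => by ring)] at h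
    exact h
  have hm2 : ∫ ω, X ω 2 ∂μ = 0 := by
    have h := hE0 0 0 1 0
    rw [show (∫ ω, (0 * X ω 0 + 0 * X ω 1 + 1 * X ω 2 + 0 * X ω 3) ∂μ)
        = ∫ ω, X ω 2 ∂μ from intcongr _ _ (fun ω => by ring)] at h
    exact h
  have hm3 : ∫ ω, X ω 3 ∂μ = 0 := by
    have h := hE0 0 0 0 1
    rw [show (∫ ω, (0 * X ω 0 + 0 * X ω 1 + 0 * X ω 2 + 1 * X ω 3) ∂μ)
        = ∫ ω, X ω 3 ∂μ from intcongr _ _ (fun ω => by ring)] at h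
    exact h
  have hint4 : ∀ s t u : ℝ,
      Integrable (fun ω => (X ω 0 + s * X ω 1 + t * X ω 2 + u * X ω 3) ^ 4) μ := by
    intro s t u
    exact (hI 1 s t u 4).congr (by filter_upwards with ω; ring)
  have iQ1 : Integrable (fun ω => (X ω 0 + 1 * X ω 1 + 1 * X ω 2 + 1 * X ω 3) ^ 4 - (X ω 0 + 1 * X ω 1 + 1 * X ω 2 + (-1) * X ω 3) ^ 4) μ := (hint4 1 1 1).sub (hint4 1 1 (-1))
  have iQ2 : Integrable (fun ω => (X ω 0 + 1 * X ω 1 + 1 * X ω 2 + 1 * X ω 3) ^ 4 - (X ω 0 + 1 * X ω 1 + 1 * X ω 2 + (-1) * X ω 3) ^ 4 - (X ω 0 + 1 * X ω 1 + (-1) * X ω 2 + 1 * X ω 3) ^ 4) μ := iQ1.sub (hint4 1 (-1) 1)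
  have iQ3 : Integrable (fun ω => (X ω 0 + 1 * X ω 1 + 1 * X ω 2 + 1 * X ω 3) ^ 4 - (X ω 0 + 1 * X ω 1 + 1 * X ω 2 + (-1) * X ω 3) ^ 4 - (X ω 0 + 1 * X ω 1 + (-1) * X ω 2 + 1 * X ω 3) ^ 4 + (X ω 0 + 1 * X ω 1 + (-1) * X ω 2 + (-1) * X ω 3) ^ 4) μ := iQ2.add (hint4 1 (-1) (-1))
  have iQ4 : Integrable (fun ω => (X ω 0 + 1 * X ω 1 + 1 * X ω 2 + 1 * X ω 3) ^ 4 - (X ω 0 + 1 * X ω 1 + 1 * X ω 2 + (-1) * X ω 3) ^ 4 - (X ω 0 + 1 * X ω 1 + (-1) * X ω 2 + 1 * X ω 3) ^ 4 + (X ω 0 + 1 * X ω 1 + (-1) * X ω 2 + (-1) * X ω 3) ^ 4 - (X ω 0 + (-1) * X ω 1 + 1 * X ω 2 + 1 * X ω 3) ^ 4) μ := iQ3.sub (hint4 (-1) 1 1)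
  have iQ5 : Integrable (fun ω => (X ω 0 + 1 * X ω 1 + 1 * X ω 2 + 1 * X ω 3) ^ 4 - (X ω 0 + 1 * X ω 1 + 1 * X ω 2 + (-1) * X ω 3) ^ 4 - (X ω 0 + 1 * X ω 1 + (-1) * X ω 2 + 1 * X ω 3) ^ 4 + (X ω 0 + 1 * X ω 1 + (-1) * X ω 2 + (-1) * X ω 3) ^ 4 - (X ω 0 + (-1) * X ω 1 + 1 * X ω 2 + 1 * X ω 3) ^ 4 + (X ω 0 + (-1) * X ω 1 + 1 * X ω 2 + (-1) * X ω 3) ^ 4) μ := iQ4.add (hint4 (-1) 1 (-1))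
  have iQ6 : Integrable (fun ω => (X ω 0 + 1 * X ω 1 + 1 * X ω 2 + 1 * X ω 3) ^ 4 - (X ω 0 + 1 * X ω 1 + 1 * X ω 2 + (-1) * X ω 3) ^ 4 - (X ω 0 + 1 * X ω 1 + (-1) * X ω 2 + 1 * X ω 3) ^ 4 + (X ω 0 + 1 * X ω 1 + (-1) * X ω 2 + (-1) * X ω 3) ^ 4 - (X ω 0 + (-1) * X ω 1 + 1 * X ω 2 + 1 * X ω 3) ^ 4 + (X ω 0 + (-1) * X ω 1 + 1 * X ω 2 + (-1) * X ω 3) ^ 4 + (X ω 0 + (-1) * X ω 1 + (-1) * X ω 2 + 1 * X ω 3) ^ 4) μ := iQ5.add (hint4 (-1) (-1) 1)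
  have iQ7 : Integrable (fun ω => (X ω 0 + 1 * X ω 1 + 1 * X ω 2 + 1 * X ω 3) ^ 4 - (X ω 0 + 1 * X ω 1 + 1 * X ω 2 + (-1) * X ω 3) ^ 4 - (X ω 0 + 1 * X ω 1 + (-1) * X ω 2 + 1 * X ω 3) ^ 4 + (X ω 0 + 1 * X ω 1 + (-1) * X ω 2 + (-1) * X ω 3) ^ 4 - (X ω 0 + (-1) * X ω 1 + 1 * X ω 2 + 1 * X ω 3) ^ 4 + (X ω 0 + (-1) * X ω 1 + 1 * X ω 2 + (-1) * X ω 3) ^ 4 + (X ω 0 + (-1) * X ω 1 + (-1) * X ω 2 + 1 * X ω 3) ^ 4 - (X ω 0 + (-1) * X ω 1 + (-1) * X ω 2 + (-1) * X ω 3) ^ 4) μ := iQ6.sub (hint4 (-1) (-1) (-1))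
  rw [show (∫ ω, X ω 0 * X ω 1 * X ω 2 * X ω 3 ∂μ)
      = ∫ ω, (1 / 192) * ((X ω 0 + 1 * X ω 1 + 1 * X ω 2 + 1 * X ω 3) ^ 4 - (X ω 0 + 1 * X ω 1 + 1 * X ω 2 + (-1) * X ω 3) ^ 4 - (X ω 0 + 1 * X ω 1 + (-1) * X ω 2 + 1 * X ω 3) ^ 4 + (X ω 0 + 1 * X ω 1 + (-1) * X ω 2 + (-1) * X ω 3) ^ 4 - (X ω 0 + (-1) * X ω 1 + 1 * X ω 2 + 1 * X ω 3) ^ 4 + (X ω 0 + (-1) * X ω 1 + 1 * X ω 2 + (-1) * X ω 3) ^ 4 + (X ω 0 + (-1) * X ω 1 + (-1) * X ω 2 + 1 * X ω 3) ^ 4 - (X ω 0 + (-1) * X ω 1 + (-1) * X ω 2 + (-1) * X ω 3) ^ 4) ∂μ from intcongr _ _ (fun ω => by ring)]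
  rw [MeasureTheory.integral_const_mul]
  rw [integral_sub iQ6 (hint4 (-1) (-1) (-1)), integral_add iQ5 (hint4 (-1) (-1) 1), integral_add iQ4 (hint4 (-1) 1 (-1)), integral_sub iQ3 (hint4 (-1) 1 1), integral_add iQ2 (hint4 1 (-1) (-1)), integral_sub iQ1 (hint4 1 (-1) 1), integral_sub (hint4 1 1 1) (hint4 1 1 (-1))]
  rw [hQ 1 1 1, hQ 1 1 (-1), hQ 1 (-1) 1, hQ 1 (-1) (-1), hQ (-1) 1 1, hQ (-1) 1 (-1), hQ (-1) (-1) 1, hQ (-1) (-1) (-1)]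
  simp only [covRV]
  rw [hm0, hm1, hm2, hm3]
  ring
end

section
/- Fix a natural number k and real multivariate polynomials g₁, …, g_r ∈ ℝ[X₁, …, X_k]. There exists a polynomial P with real coefficients in the k(k+1)/2 variables indexed by pairs (i, j) with 1 ≤ i ≤ j ≤ k, depending only on g₁, …, g_r, such that for every centered multivariate Gaussian vector ξ = (ξ₁, …, ξ_k) with covariance matrix C, the mixed moment E(g₁(ξ) ⋯ g_r(ξ)) equals P evaluated at the entries (C_{ij})_{i ≤ j} of C. (This is the core of the paper's Corollary: moments of polynomial functions of a Gaussian vector are fixed polynomials in the covariance entries.) -/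
open MeasureTheory ProbabilityTheory Finset

namespace GaussAux

lemma integrable_pow_mul_exp (n : ℕ) {b : ℝ} (hb : 0 < b) :
    Integrable (fun x : ℝ => x ^ n * Real.exp (-b * x ^ 2)) := by
  have h := integrable_rpow_mul_exp_neg_mul_sq hb (s := (n : ℝ)) (by exact_mod_cast neg_one_lt_zero.trans_le (Nat.cast_nonneg n))
  simpa [Real.rpow_natCast] using h

lemma integrable_pow_g01 (n : ℕ) :
    Integrable (fun x : ℝ => x ^ n) (gaussianReal 0 1) := by
  rw [gaussianReal_of_var_ne_zero 0 one_ne_zero,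
    integrable_withDensity_iff (measurable_gaussianPDF 0 1)
      (Filter.Eventually.of_forall fun x => ENNReal.ofReal_lt_top)]
  have : (fun x : ℝ => x ^ n * (gaussianPDF 0 1 x).toReal)
      = fun x => ((Real.sqrt (2 * Real.pi * 1))⁻¹) * (x ^ n * Real.exp (-(1/2 : ℝ) * x ^ 2)) := by
    funext x
    rw [gaussianPDF, ENNReal.toReal_ofReal (gaussianPDFReal_nonneg 0 1 x), gaussianPDFReal]
    push_cast
    ring_nf
  rw [this]
  exact (integrable_pow_mul_exp n (by norm_num)).const_mul _

end GaussAux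

noncomputable def cg (n : ℕ) : ℝ := ∫ x, x ^ n ∂(gaussianReal 0 1)

namespace GaussAux2
open GaussAux

lemma g0v_eq_map (v : NNReal) :
    gaussianReal 0 v = (gaussianReal 0 1).map (fun x => (Real.sqrt v) * x) := by
  rw [show (fun x : ℝ => (Real.sqrt v) * x) = ((Real.sqrt v) * ·) from rfl,
    gaussianReal_map_const_mul (Real.sqrt v)]
  congr 1
  · simp
  · ext
    simp [Real.sq_sqrt v.coe_nonneg]

lemma integrable_pow_g0v (v : NNReal) (n : ℕ) :
    Integrable (fun x : ℝ => x ^ n) (gaussianReal 0 v) := by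
  rw [g0v_eq_map v, integrable_map_measure (by fun_prop) (by fun_prop)]
  have : ((fun x : ℝ => x ^ n) ∘ fun x => (Real.sqrt v) * x)
      = fun x => (Real.sqrt v) ^ n * x ^ n := by
    funext x; simp [mul_pow]
  rw [this]
  exact (integrable_pow_g01 n).const_mul _

lemma integral_pow_g0v (v : NNReal) (n : ℕ) :
    ∫ x, x ^ n ∂(gaussianReal 0 v) = (Real.sqrt v) ^ n * cg n := by
  rw [g0v_eq_map v, integral_map (by fun_prop) (by fun_prop)]
  simp_rw [mul_pow, integral_const_mul, cg]

lemma cg_odd {n : ℕ} (hn : Odd n) : cg n = 0 := by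
  have h : (gaussianReal 0 1).map ((-1 : ℝ) * ·) = gaussianReal 0 1 := by
    rw [gaussianReal_map_const_mul (-1 : ℝ)]
    congr 1
    · simp
    · ext; norm_num
  have h2 : cg n = ∫ x, x ^ n ∂((gaussianReal 0 1).map ((-1:ℝ) * ·)) := by rw [h, cg]
  rw [integral_map (by fun_prop) (by fun_prop)] at h2
  simp only [neg_one_mul, hn.neg_pow, integral_neg] at h2
  have h3 : (∫ (a:ℝ), a ^ n ∂gaussianReal 0 1) = cg n := rfl
  rw [h3] at h2
  linarith

lemma cg_two_pos : 0 < cg 2 := by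
  rw [cg]
  rw [integral_pos_iff_support_of_nonneg (fun x => sq_nonneg x) (integrable_pow_g01 2)]
  have hsupp : (Function.support fun x : ℝ => x ^ 2) = {(0:ℝ)}ᶜ := by
    ext x; simp [Function.mem_support, pow_eq_zero_iff]
  rw [hsupp]
  have h0 : gaussianReal 0 1 {(0:ℝ)} = 0 :=
    gaussianReal_absolutelyContinuous 0 one_ne_zero (measure_singleton 0)
  have := measure_compl (μ := gaussianReal 0 1) (measurableSet_singleton (0:ℝ)) (measure_ne_top _ _)
  rw [this, h0]
  simp

end GaussAux2

section Polar
variable {A : Type*} [CommRing A]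

lemma alt_sum_pow {β : Type*} [DecidableEq β] (x : Finset β) :
    (∑ m ∈ x.powerset, (-1 : A) ^ m.card) = if x = ∅ then 1 else 0 := by
  have h := Finset.sum_powerset_neg_one_pow_card (x := x)
  have : ((∑ m ∈ x.powerset, (-1 : ℤ) ^ m.card : ℤ) : A)
      = ∑ m ∈ x.powerset, (-1 : A) ^ m.card := by push_cast; rfl
  rw [← this, h]
  split <;> simp

lemma polar_sum (d : ℕ) (y : Fin d → A) :
    ∑ S : Finset (Fin d), (-1 : A) ^ (d - S.card) * (∑ j ∈ S, y j) ^ d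
      = ((univ.filter fun p : Fin d → Fin d => Finset.image p univ = univ).card : A)
          * ∏ j, y j := by
  classical
  have hpi : ∀ S : Finset (Fin d),
      Fintype.piFinset (fun _ : Fin d => S) = univ.filter (fun p => Finset.image p univ ⊆ S) := by
    intro S
    ext p
    simp [Fintype.mem_piFinset, Finset.image_subset_iff]
  calc
    ∑ S : Finset (Fin d), (-1 : A) ^ (d - S.card) * (∑ j ∈ S, y j) ^ d
        = ∑ S : Finset (Fin d), ∑ p : Fin d → Fin d,
            (if Finset.image p univ ⊆ S then (-1 : A) ^ (d - S.card) * ∏ i, y (p i) else 0) := by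
        refine Finset.sum_congr rfl fun S _ => ?_
        rw [Finset.sum_pow' S y d, Finset.mul_sum, hpi S, Finset.sum_filter]
    _ = ∑ p : Fin d → Fin d, (∑ S : Finset (Fin d),
            (if Finset.image p univ ⊆ S then (-1 : A) ^ (d - S.card) else 0)) * ∏ i, y (p i) := by
        rw [Finset.sum_comm]
        refine Finset.sum_congr rfl fun p _ => ?_
        rw [Finset.sum_mul]
        refine Finset.sum_congr rfl fun S _ => ?_
        rw [ite_mul, zero_mul]
    _ = ∑ p : Fin d → Fin d,
          (if Finset.image p univ = univ then 1 else 0) * ∏ i, y (p i) := by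
        refine Finset.sum_congr rfl fun p _ => ?_
        congr 1
        have hbij : ∑ S : Finset (Fin d),
            (if Finset.image p univ ⊆ S then (-1 : A) ^ (d - S.card) else 0)
            = ∑ S : Finset (Fin d), (if S ⊆ (Finset.image p univ)ᶜ then (-1 : A) ^ S.card else 0) := by
          refine Fintype.sum_bijective compl compl_involutive.bijective _ _ fun S => ?_
          have h1 : Sᶜ ⊆ (Finset.image p univ)ᶜ ↔ Finset.image p univ ⊆ S := by
            exact Finset.compl_subset_compl
          have h2 : Sᶜ.card = d - S.card := by
            rw [Finset.card_compl, Fintype.card_fin]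
          rw [h2]
          by_cases h : Finset.image p univ ⊆ S <;> simp [h, h1]
        have hbij2 : ∑ S : Finset (Fin d),
            (if S ⊆ (Finset.image p univ)ᶜ then (-1 : A) ^ S.card else 0)
            = ∑ S ∈ (Finset.image p univ)ᶜ.powerset, (-1 : A) ^ S.card := by
          simp_rw [← Finset.mem_powerset]
          rw [Finset.sum_ite_mem, Finset.univ_inter]
        rw [hbij, hbij2, alt_sum_pow]
        have : (Finset.image p univ)ᶜ = ∅ ↔ Finset.image p univ = univ := by
          rw [Finset.compl_eq_empty_iff]
        simp only [this]
    _ = ((univ.filter fun p : Fin d → Fin d => Finset.image p univ = univ).card : A) * ∏ j, y j := by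
        simp_rw [ite_mul, one_mul, zero_mul, ← Finset.sum_filter]
        rw [Finset.sum_congr rfl (fun p hp => ?_), Finset.sum_const, nsmul_eq_mul]
        have hs : Function.Surjective p := by
          intro b
          have hb : b ∈ Finset.image p univ := by
            rw [(Finset.mem_filter.mp hp).2]; exact Finset.mem_univ b
          obtain ⟨a, _, ha⟩ := Finset.mem_image.mp hb
          exact ⟨a, ha⟩
        exact hs.bijective_of_finite.prod_comp y
end Polar

section Span
open MvPolynomial

variable {k : ℕ}

noncomputable def genSet (k : ℕ) : Set (MvPolynomial (Fin k) ℝ) :=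
  {p | ∃ (a : Fin k → ℝ) (n : ℕ), p = (∑ i, MvPolynomial.C (a i) * MvPolynomial.X i) ^ n}

lemma sum_X_mem_form {d : ℕ} (e : Fin d → Fin k) (S : Finset (Fin d)) :
    ∃ a : Fin k → ℝ, (∑ j ∈ S, (X (e j) : MvPolynomial (Fin k) ℝ))
      = ∑ i, MvPolynomial.C (a i) * MvPolynomial.X i := by
  classical
  refine ⟨fun i => ((S.filter fun j => e j = i).card : ℝ), ?_⟩
  rw [← Finset.sum_fiberwise_of_maps_to (g := e) (t := univ) (fun j _ => Finset.mem_univ (e j))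
    (fun j => (X (e j) : MvPolynomial (Fin k) ℝ))]
  refine Finset.sum_congr rfl fun i _ => ?_
  have hcongr : (∑ j ∈ S.filter fun j => e j = i, (X (e j) : MvPolynomial (Fin k) ℝ))
      = ∑ _j ∈ S.filter fun j => e j = i, (X i : MvPolynomial (Fin k) ℝ) :=
    Finset.sum_congr rfl fun j hj => by rw [(Finset.mem_filter.mp hj).2]
  rw [hcongr, Finset.sum_const, ← Nat.cast_smul_eq_nsmul ℝ, MvPolynomial.smul_eq_C_mul]

lemma prod_X_mem_span {d : ℕ} (e : Fin d → Fin k) :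
    (∏ j, (X (e j) : MvPolynomial (Fin k) ℝ)) ∈ Submodule.span ℝ (genSet k) := by
  classical
  set N := (univ.filter fun p : Fin d → Fin d => Finset.image p univ = univ).card with hN
  have hNpos : 0 < N := by
    refine Finset.card_pos.mpr ⟨id, ?_⟩
    simp [Finset.mem_filter, Finset.image_id]
  have key := polar_sum d (fun j => (X (e j) : MvPolynomial (Fin k) ℝ))
  have hsmul : ((N : ℝ)) • (∏ j, (X (e j) : MvPolynomial (Fin k) ℝ))
      = (N : MvPolynomial (Fin k) ℝ) * ∏ j, X (e j) := by
    rw [MvPolynomial.smul_eq_C_mul, map_natCast]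
  have heq : (∏ j, (X (e j) : MvPolynomial (Fin k) ℝ))
      = (N : ℝ)⁻¹ • ∑ S : Finset (Fin d), (-1 : MvPolynomial (Fin k) ℝ) ^ (d - S.card)
          * (∑ j ∈ S, X (e j)) ^ d := by
    rw [key, ← hsmul, smul_smul, inv_mul_cancel₀ (by exact_mod_cast hNpos.ne'), one_smul]
  rw [heq]
  refine Submodule.smul_mem _ _ (Submodule.sum_mem _ fun S _ => ?_)
  have hterm : (-1 : MvPolynomial (Fin k) ℝ) ^ (d - S.card) * (∑ j ∈ S, X (e j)) ^ d
      = ((-1 : ℝ) ^ (d - S.card)) • ((∑ j ∈ S, X (e j)) ^ d) := by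
    rw [MvPolynomial.smul_eq_C_mul, map_pow, map_neg, map_one]
  rw [hterm]
  refine Submodule.smul_mem _ _ (Submodule.subset_span ?_)
  obtain ⟨a, ha⟩ := sum_X_mem_form e S
  exact ⟨a, d, by rw [ha]⟩

lemma monomial_one_mem_span (u : Fin k →₀ ℕ) :
    (MvPolynomial.monomial u (1 : ℝ)) ∈ Submodule.span ℝ (genSet k) := by
  classical
  set l := u.toMultiset.toList with hl
  have h1 : (MvPolynomial.monomial u (1 : ℝ)) = ∏ j : Fin l.length, X (l.get j) := by
    rw [MvPolynomial.monomial_eq, map_one, one_mul]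
    have h2 : (u.prod fun n e => (X n : MvPolynomial (Fin k) ℝ) ^ e)
        = ((u.mapDomain (X : Fin k → MvPolynomial (Fin k) ℝ)).prod fun p n => p ^ n) := by
      rw [Finsupp.prod_mapDomain_index (fun p => pow_zero p) (fun p m n => pow_add p m n)]
    have h3 : ((u.mapDomain (X : Fin k → MvPolynomial (Fin k) ℝ)).prod fun p n => p ^ n)
        = (u.toMultiset.map (X : Fin k → MvPolynomial (Fin k) ℝ)).prod := by
      rw [Finsupp.toMultiset_map, Finsupp.prod_toMultiset]
    have h4 : (u.toMultiset.map (X : Fin k → MvPolynomial (Fin k) ℝ)).prod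
        = ∏ j : Fin l.length, X (l.get j) := by
      conv_lhs => rw [← u.toMultiset.coe_toList, ← hl, Multiset.map_coe, Multiset.prod_coe,
        ← List.ofFn_get l, List.map_ofFn, List.prod_ofFn]
      rfl
    rw [h2, h3, h4]
  rw [h1]
  exact prod_X_mem_span l.get

end Span

lemma mem_span_gen {k : ℕ} (G : MvPolynomial (Fin k) ℝ) : G ∈ Submodule.span ℝ (genSet k) := by
  induction G using MvPolynomial.induction_on' with
  | monomial u a =>
      have h : MvPolynomial.monomial u a = a • MvPolynomial.monomial u (1 : ℝ) := by
        rw [MvPolynomial.smul_monomial, smul_eq_mul, mul_one]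
      rw [h]
      exact Submodule.smul_mem _ a (monomial_one_mem_span u)
  | add p q hp hq => exact Submodule.add_mem _ hp hq

section Prob
open GaussAux2

variable {k : ℕ} {Ω : Type} [MeasurableSpace Ω] {μ : Measure Ω} [IsProbabilityMeasure μ]
  {ξ : Ω → Fin k → ℝ}

lemma meas_coord (hξ : IsCenteredGaussian μ ξ) (i : Fin k) : Measurable fun ω => ξ ω i :=
  (measurable_pi_apply i).comp hξ.1

lemma meas_lin (hξ : IsCenteredGaussian μ ξ) (a : Fin k → ℝ) : Measurable fun ω => ∑ i, a i * ξ ω i :=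
  Finset.univ.measurable_sum fun i _ => (meas_coord hξ i).const_mul (a i)

lemma integrable_lin_pow (hξ : IsCenteredGaussian μ ξ) (a : Fin k → ℝ) (n : ℕ) :
    Integrable (fun ω => (∑ i, a i * ξ ω i) ^ n) μ := by
  obtain ⟨v, hv⟩ := hξ.2 a
  have h := integrable_pow_g0v v n
  rw [← hv, integrable_map_measure (by fun_prop) (meas_lin hξ a).aemeasurable] at h
  exact h

lemma coord_eq_lin (i : Fin k) :
    (fun ω => ξ ω i) = fun ω => ∑ j, (fun j => if j = i then (1:ℝ) else 0) j * ξ ω j := by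
  funext ω
  rw [Finset.sum_eq_single i (fun b _ hb => by simp [hb]) (by simp)]
  simp

lemma integrable_coord_pow (hξ : IsCenteredGaussian μ ξ) (i : Fin k) (n : ℕ) :
    Integrable (fun ω => ξ ω i ^ n) μ := by
  have h := integrable_lin_pow hξ (fun j => if j = i then (1:ℝ) else 0) n
  simpa [← coord_eq_lin (ξ := ξ) i] using h

lemma monomial_bound (x : Fin k → ℝ) (dfun : Fin k → ℕ) {m : ℕ} (hm : (∑ i, dfun i) ≤ 2 * m) :
    |∏ i, x i ^ dfun i| ≤ 1 + ∑ i, x i ^ (2 * m) := by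
  have habs : |∏ i, x i ^ dfun i| = ∏ i, |x i| ^ dfun i := by
    rw [Finset.abs_prod]
    exact Finset.prod_congr rfl fun i _ => abs_pow _ _
  have hsum_nonneg : (0:ℝ) ≤ ∑ i, x i ^ (2 * m) :=
    Finset.sum_nonneg fun i _ => (even_two_mul m).pow_nonneg _
  rw [habs]
  by_cases hle : ∀ i, |x i| ≤ 1
  · have : ∏ i, |x i| ^ dfun i ≤ 1 := by
      apply Finset.prod_le_one (fun i _ => by positivity)
      intro i _
      exact pow_le_one₀ (abs_nonneg _) (hle i)
    linarith
  · push_neg at hle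
    obtain ⟨i₁, hi₁⟩ := hle
    obtain ⟨i₀, _, hmax⟩ := Finset.exists_max_image univ (fun i => |x i|) ⟨i₁, Finset.mem_univ i₁⟩
    have h1 : (1:ℝ) ≤ |x i₀| := le_trans hi₁.le (hmax i₁ (Finset.mem_univ i₁))
    have h2 : ∏ i, |x i| ^ dfun i ≤ ∏ i, |x i₀| ^ dfun i :=
      Finset.prod_le_prod (fun i _ => by positivity)
        (fun i _ => pow_le_pow_left₀ (abs_nonneg _) (hmax i (Finset.mem_univ i)) _)
    have h3 : ∏ i, |x i₀| ^ dfun i = |x i₀| ^ (∑ i, dfun i) := by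
      rw [← Finset.prod_pow_eq_pow_sum]
    have h4 : |x i₀| ^ (∑ i, dfun i) ≤ |x i₀| ^ (2 * m) := pow_le_pow_right₀ h1 hm
    have h5 : |x i₀| ^ (2 * m) = x i₀ ^ (2 * m) := (even_two_mul m).pow_abs _
    have h6 : x i₀ ^ (2 * m) ≤ ∑ i, x i ^ (2 * m) :=
      Finset.single_le_sum (f := fun i => x i ^ (2 * m))
        (fun i _ => (even_two_mul m).pow_nonneg _) (Finset.mem_univ i₀)
    linarith

lemma integrable_monomial (hξ : IsCenteredGaussian μ ξ) (dfun : Fin k → ℕ) :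
    Integrable (fun ω => ∏ i, ξ ω i ^ dfun i) μ := by
  set m := ∑ i, dfun i with hm
  have hbound : ∀ ω, ‖∏ i, ξ ω i ^ dfun i‖ ≤ 1 + ∑ i, ξ ω i ^ (2 * m) := by
    intro ω
    rw [Real.norm_eq_abs]
    exact monomial_bound (fun i => ξ ω i) dfun (by omega)
  refine Integrable.mono' ?_ ?_ (Filter.Eventually.of_forall hbound)
  · exact (integrable_const (1:ℝ)).add
      (integrable_finset_sum _ fun i _ => integrable_coord_pow hξ i (2 * m))
  · exact (Finset.univ.measurable_prod fun i _ =>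
      (meas_coord hξ i).pow measurable_const).aestronglyMeasurable

lemma integrable_eval (hξ : IsCenteredGaussian μ ξ) (G : MvPolynomial (Fin k) ℝ) :
    Integrable (fun ω => MvPolynomial.eval (ξ ω) G) μ := by
  induction G using MvPolynomial.induction_on' with
  | monomial u a =>
      have h : (fun ω => MvPolynomial.eval (ξ ω) (MvPolynomial.monomial u a))
          = fun ω => a * ∏ i, ξ ω i ^ u i := by
        funext ω
        rw [MvPolynomial.eval_monomial, Finsupp.prod_pow]
      rw [h]
      exact (integrable_monomial hξ u).const_mul a
  | add p q hp hq =>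
      have h : (fun ω => MvPolynomial.eval (ξ ω) (p + q))
          = fun ω => MvPolynomial.eval (ξ ω) p + MvPolynomial.eval (ξ ω) q := by
        funext ω; rw [map_add]
      rw [h]
      exact hp.add hq

lemma integrable_mul_coord (hξ : IsCenteredGaussian μ ξ) (i j : Fin k) :
    Integrable (fun ω => ξ ω i * ξ ω j) μ := by
  refine Integrable.mono' ((integrable_coord_pow hξ i 2).add (integrable_coord_pow hξ j 2))
    ((meas_coord hξ i).mul (meas_coord hξ j)).aestronglyMeasurable
    (Filter.Eventually.of_forall fun ω => ?_)
  rw [Real.norm_eq_abs, abs_mul]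
  simp only [Pi.add_apply]
  nlinarith [sq_nonneg (|ξ ω i| - |ξ ω j|), abs_nonneg (ξ ω i), abs_nonneg (ξ ω j),
    sq_abs (ξ ω i), sq_abs (ξ ω j)]

lemma var_eq (hξ : IsCenteredGaussian μ ξ) (a : Fin k → ℝ) {v : NNReal}
    (hv : Measure.map (fun ω => ∑ i, a i * ξ ω i) μ = gaussianReal 0 v) :
    (v : ℝ) * cg 2 = ∑ i, ∑ j, a i * a j * ∫ ω, ξ ω i * ξ ω j ∂μ := by
  have h1 : ∫ ω, (∑ i, a i * ξ ω i) ^ 2 ∂μ = (v : ℝ) * cg 2 := by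
    have h0 : ∫ x, x ^ 2 ∂(gaussianReal 0 v) = (v : ℝ) * cg 2 := by
      rw [integral_pow_g0v, Real.sq_sqrt v.coe_nonneg]
    rw [← h0, ← hv, integral_map (meas_lin hξ a).aemeasurable (by fun_prop)]
  rw [← h1]
  have h2 : ∀ ω, (∑ i, a i * ξ ω i) ^ 2 = ∑ i, ∑ j, a i * a j * (ξ ω i * ξ ω j) := by
    intro ω
    rw [sq, Finset.sum_mul_sum]
    exact Finset.sum_congr rfl fun i _ => Finset.sum_congr rfl fun j _ => by ring
  simp_rw [h2]
  rw [integral_finset_sum _ fun i _ => integrable_finset_sum _ fun j _ =>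
    ((integrable_mul_coord hξ i j).const_mul _)]
  refine Finset.sum_congr rfl fun i _ => ?_
  rw [integral_finset_sum _ fun j _ => ((integrable_mul_coord hξ i j).const_mul _)]
  exact Finset.sum_congr rfl fun j _ => integral_const_mul _ _

lemma gen_moment (hξ : IsCenteredGaussian μ ξ) (a : Fin k → ℝ) (n : ℕ) :
    ∫ ω, (∑ i, a i * ξ ω i) ^ n ∂μ
      = if Even n then (cg n / cg 2 ^ (n / 2))
          * (∑ i, ∑ j, a i * a j * ∫ ω, ξ ω i * ξ ω j ∂μ) ^ (n / 2)
        else 0 := by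
  obtain ⟨v, hv⟩ := hξ.2 a
  have h1 : ∫ ω, (∑ i, a i * ξ ω i) ^ n ∂μ = Real.sqrt v ^ n * cg n := by
    rw [← integral_pow_g0v, ← hv, integral_map (meas_lin hξ a).aemeasurable (by fun_prop)]
  rw [h1]
  by_cases hn : Even n
  · simp only [hn, if_true]
    obtain ⟨m, hm⟩ := hn
    have hm2 : n = 2 * m := by omega
    have hdiv : n / 2 = m := by omega
    have hsq : Real.sqrt v ^ n = (v : ℝ) ^ m := by
      rw [hm2, pow_mul, Real.sq_sqrt v.coe_nonneg]
    have hvval : (v : ℝ) = (∑ i, ∑ j, a i * a j * ∫ ω, ξ ω i * ξ ω j ∂μ) / cg 2 := by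
      rw [eq_div_iff cg_two_pos.ne']
      exact var_eq hξ a hv
    rw [hsq, hvval, hdiv, div_pow]
    ring
  · simp only [hn, if_false, cg_odd (Nat.not_even_iff_odd.mp hn), mul_zero]

end Prob

noncomputable def ord {k : ℕ} (p : Fin k × Fin k) : {ij : Fin k × Fin k // ij.1 ≤ ij.2} :=
  if h : p.1 ≤ p.2 then ⟨p, h⟩ else ⟨(p.2, p.1), le_of_not_ge h⟩

/-- For fixed real multivariate polynomials `g₁, …, g_r ∈ ℝ[X₁, …, X_k]` there is a fixed
polynomial `P` in the variables indexed by the pairs `(i, j)` with `i ≤ j`, depending only on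
`g₁, …, g_r`, such that for every centered multivariate Gaussian vector `ξ` with covariance
matrix `C`, the mixed moment `E(g₁(ξ) ⋯ g_r(ξ))` equals `P` evaluated at the entries
`(C_{ij})_{i ≤ j}`. -/
theorem moment_polynomials_polynomial_in_covariances (k r : ℕ)
    (g : Fin r → MvPolynomial (Fin k) ℝ) :
    ∃ P : MvPolynomial {ij : Fin k × Fin k // ij.1 ≤ ij.2} ℝ,
      ∀ (Ω : Type) [MeasurableSpace Ω] (μ : Measure Ω) [IsProbabilityMeasure μ]
        (ξ : Ω → Fin k → ℝ), IsCenteredGaussian μ ξ →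
        ∫ ω, ∏ j, MvPolynomial.eval (ξ ω) (g j) ∂μ =
          MvPolynomial.eval (fun ij => ∫ ω, ξ ω ij.1.1 * ξ ω ij.1.2 ∂μ) P := by
  classical
  let M : Submodule ℝ (MvPolynomial (Fin k) ℝ) :=
  { carrier := {G | ∃ P : MvPolynomial {ij : Fin k × Fin k // ij.1 ≤ ij.2} ℝ,
      ∀ (Ω : Type) [MeasurableSpace Ω] (μ : Measure Ω) [IsProbabilityMeasure μ]
        (ξ : Ω → Fin k → ℝ), IsCenteredGaussian μ ξ →
        ∫ ω, MvPolynomial.eval (ξ ω) G ∂μ =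
          MvPolynomial.eval (fun ij => ∫ ω, ξ ω ij.1.1 * ξ ω ij.1.2 ∂μ) P}
    add_mem' := by
      rintro G₁ G₂ ⟨P₁, h₁⟩ ⟨P₂, h₂⟩
      refine ⟨P₁ + P₂, ?_⟩
      intro Ω _ μ _ ξ hξ
      have he : ∀ x : Fin k → ℝ, MvPolynomial.eval x (G₁ + G₂)
          = MvPolynomial.eval x G₁ + MvPolynomial.eval x G₂ := fun x => map_add _ _ _
      simp_rw [he]
      rw [integral_add (integrable_eval hξ G₁) (integrable_eval hξ G₂),
        h₁ Ω μ ξ hξ, h₂ Ω μ ξ hξ, map_add]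
    zero_mem' := ⟨0, fun Ω _ μ _ ξ _ => by simp⟩
    smul_mem' := by
      rintro c G ⟨P, h⟩
      refine ⟨c • P, ?_⟩
      intro Ω _ μ _ ξ hξ
      have he : ∀ x : Fin k → ℝ, MvPolynomial.eval x (c • G)
          = c * MvPolynomial.eval x G := fun x => by
        rw [MvPolynomial.smul_eq_C_mul, map_mul, MvPolynomial.eval_C]
      simp_rw [he]
      rw [integral_const_mul, h Ω μ ξ hξ, MvPolynomial.smul_eq_C_mul, map_mul,
        MvPolynomial.eval_C]
    }
  have hgen : genSet k ⊆ M := by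
    rintro G ⟨a, n, rfl⟩
    refine ⟨if Even n then (MvPolynomial.C (cg n / cg 2 ^ (n / 2)))
        * (∑ i, ∑ j, MvPolynomial.C (a i * a j)
          * MvPolynomial.X (ord (i, j))) ^ (n / 2) else 0, ?_⟩
    intro Ω _ μ _ ξ hξ
    have he : ∀ x : Fin k → ℝ,
        MvPolynomial.eval x ((∑ i, MvPolynomial.C (a i) * MvPolynomial.X i) ^ n)
          = (∑ i, a i * x i) ^ n := fun x => by
      rw [map_pow, map_sum]
      simp [MvPolynomial.eval_C, MvPolynomial.eval_X]
    simp_rw [he]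
    rw [gen_moment hξ a n]
    have hcov : ∀ i j : Fin k,
        ∫ ω, ξ ω ((ord (i, j)).1).1 * ξ ω ((ord (i, j)).1).2 ∂μ
          = ∫ ω, ξ ω i * ξ ω j ∂μ := by
      intro i j
      unfold ord
      split
      · rfl
      · simp only []
        congr 1
        funext ω
        exact mul_comm _ _
    by_cases hn : Even n
    · simp only [hn, if_true, map_mul, map_pow, map_sum, MvPolynomial.eval_C,
        MvPolynomial.eval_X]
      congr 1
      refine congrArg (· ^ (n / 2)) ?_
      refine Finset.sum_congr rfl fun i _ => Finset.sum_congr rfl fun j _ => ?_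
      rw [hcov i j, mul_assoc]
    · simp [hn]
  have hmem : (∏ j, g j) ∈ M :=
    Submodule.span_le.mpr hgen (mem_span_gen (∏ j, g j))
  obtain ⟨P, hP⟩ := hmem
  refine ⟨P, ?_⟩
  intro Ω _ μ _ ξ hξ
  have he : ∀ x : Fin k → ℝ, (∏ j, MvPolynomial.eval x (g j))
      = MvPolynomial.eval x (∏ j, g j) := fun x => (map_prod _ _ _).symm
  simp_rw [he]
  exact hP Ω μ ξ hξ
end

section
/- Let ξ : Ω → ℝ^k be a centered multivariate Gaussian random vector, let δ : Ω → ℝ^{m₁}, ζ : Ω → ℝ^l, ε : Ω → ℝ^{m₂} be square-integrable centered random vectors (E δ = 0, E ζ = 0, E ε = 0), and assume ξ, δ, ζ, ε are mutually independent. Let f : ℝ^k → ℝ^l be a function each of whose components is a polynomial, and let Λ_x be a real m₁ × k matrix and Λ_y a real m₂ × l matrix. Define x := Λ_x ξ + δ and y := Λ_y (f(ξ) + ζ) + ε. Then for all indices i ∈ {1, …, m₂} and j ∈ {1, …, m₁}: E(yᵢ xⱼ) = (Λ_y · E(f(ξ) ξᵀ) · Λ_xᵀ)_{ij}, where E(f(ξ)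 ξᵀ) is the l × k matrix with entries E(f(ξ)_a ξ_b). (This is equation (2.8) of the paper: the cross-covariance block of a polynomial structural equation model.) -/
open MeasureTheory ProbabilityTheory Finset

section Auxiliary

open Real
open scoped ENNReal NNReal

private lemma gaussian_memLp (v : NNReal) (n : ℕ) :
    MemLp (id : ℝ → ℝ) (n : ℝ≥0∞) (gaussianReal 0 v) := by
  rcases eq_or_ne v 0 with hv | hv
  · subst hv
    rw [gaussianReal_zero_var]
    refine (memLp_const (0:ℝ)).ae_eq ?_
    rw [Filter.EventuallyEq, ae_dirac_eq]
    simp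
  rcases eq_or_ne n 0 with hn | hn
  · subst hn
    simpa using memLp_zero_iff_aestronglyMeasurable.2
      (measurable_id.aestronglyMeasurable (μ := gaussianReal 0 v))
  have hn' : (n : ℝ≥0∞) ≠ 0 := Nat.cast_ne_zero.mpr hn
  have htop : (n : ℝ≥0∞) ≠ ∞ := ENNReal.natCast_ne_top n
  have hmeas : AEStronglyMeasurable (id : ℝ → ℝ) (gaussianReal 0 v) :=
    measurable_id.aestronglyMeasurable
  refine (memLp_norm_rpow_iff hmeas hn' htop).1 ?_
  rw [ENNReal.div_self hn' htop, memLp_one_iff_integrable]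
  have hv' : (0:ℝ) < (v:ℝ) := by positivity
  have hb : (0:ℝ) < (2 * (v:ℝ))⁻¹ := by positivity
  have hint : Integrable (fun x : ℝ => |x| ^ n * rexp (-(2 * (v:ℝ))⁻¹ * x ^ 2)) := by
    have h := (integrable_rpow_mul_exp_neg_mul_sq hb
      (s := (n:ℝ)) (lt_of_lt_of_le neg_one_lt_zero (Nat.cast_nonneg n))).abs
    refine h.congr (Filter.Eventually.of_forall fun x => ?_)
    simp only [abs_mul, Real.abs_exp, Real.rpow_natCast, abs_pow]
  rw [gaussianReal_of_var_ne_zero _ hv,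
    integrable_withDensity_iff (measurable_gaussianPDF _ _)
      (Filter.Eventually.of_forall fun x => ENNReal.ofReal_lt_top)]
  refine (hint.const_mul ((Real.sqrt (2 * π * v))⁻¹)).congr
    (Filter.Eventually.of_forall fun x => ?_)
  simp only []
  rw [show gaussianPDF 0 v x = ENNReal.ofReal (gaussianPDFReal 0 v x) from rfl,
    ENNReal.toReal_ofReal (gaussianPDFReal_nonneg _ _ _), gaussianPDFReal]
  simp only [id, ENNReal.toReal_natCast, Real.rpow_natCast, Real.norm_eq_abs]
  have harg : -(2 * (v:ℝ))⁻¹ * x ^ 2 = -(x - 0) ^ 2 / (2 * (v:ℝ)) := by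
    field_simp
    ring
  rw [harg]; ring

private lemma coord_memLp {Ω : Type*} [MeasurableSpace Ω] {μ : Measure Ω}
    {k : ℕ} {ξ : Ω → Fin k → ℝ} (hξ : IsCenteredGaussian μ ξ) (i : Fin k) (n : ℕ) :
    MemLp (fun ω => ξ ω i) (n : ℝ≥0∞) μ := by
  obtain ⟨v, hv⟩ := hξ.2 (Pi.single i 1)
  have hco : ∀ j : Fin k, Measurable fun ω => ξ ω j := fun j =>
    (measurable_pi_apply j).comp hξ.1
  have hmeas : Measurable fun ω => ∑ j, (Pi.single i 1 : Fin k → ℝ) j * ξ ω j :=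
    Finset.measurable_sum _ fun j _ => (hco j).const_mul ((Pi.single i 1 : Fin k → ℝ) j)
  have h1 : MemLp (id : ℝ → ℝ) (n : ℝ≥0∞)
      (Measure.map (fun ω => ∑ j, (Pi.single i 1 : Fin k → ℝ) j * ξ ω j) μ) := by
    rw [hv]; exact gaussian_memLp v n
  have h2 : MemLp (fun ω => ∑ j, (Pi.single i 1 : Fin k → ℝ) j * ξ ω j) (n : ℝ≥0∞) μ :=
    (memLp_map_measure_iff measurable_id.aestronglyMeasurable hmeas.aemeasurable).1 h1
  have heq : (fun ω => ∑ j, (Pi.single i 1 : Fin k → ℝ) j * ξ ω j) = fun ω => ξ ω i := by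
    funext ω
    simp [Pi.single_apply]
  rwa [heq] at h2


private lemma poly_memLp {Ω : Type*} [MeasurableSpace Ω] {μ : Measure Ω} [IsProbabilityMeasure μ]
    {k : ℕ} {ξ : Ω → Fin k → ℝ} (hξ : IsCenteredGaussian μ ξ)
    (g : MvPolynomial (Fin k) ℝ) :
    ∀ n : ℕ, MemLp (fun ω => MvPolynomial.eval (ξ ω) g) (n : ℝ≥0∞) μ := by
  induction g using MvPolynomial.induction_on with
  | C a =>
      intro n
      simpa using memLp_const (μ := μ) a
  | add p q hp hq =>
      intro n
      have := (hp n).add (hq n)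
      simp only [MvPolynomial.eval_add]
      exact this
  | mul_X p i hp =>
      intro n
      have hφ := hp (2 * n)
      have hf := coord_memLp hξ i (2 * n)
      have hr : (1 : ℝ≥0∞) / (n : ℝ≥0∞) =
          1 / ((2 * n : ℕ) : ℝ≥0∞) + 1 / ((2 * n : ℕ) : ℝ≥0∞) := by
        rcases eq_or_ne n 0 with h | h
        · subst h; simp
        · have h2 : ((2 * n : ℕ) : ℝ≥0∞) = 2 * (n : ℝ≥0∞) := by push_cast; ring
          rw [h2, ENNReal.div_add_div_same, one_add_one_eq_two]
          rw [show (2 : ℝ≥0∞) / (2 * (n : ℝ≥0∞)) = 2 * 1 / (2 * (n : ℝ≥0∞)) from by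
            rw [mul_one]]
          exact (ENNReal.mul_div_mul_left 1 _ two_ne_zero ENNReal.ofNat_ne_top).symm ▸ rfl
      have := MemLp.smul (r := (n : ℝ≥0∞)) hf hφ
        (hpqr := ⟨by simpa only [one_div] using hr.symm⟩)
      simp only [MvPolynomial.eval_mul, MvPolynomial.eval_X]
      exact this

end Auxiliary

/-- **Equation (2.8).** In the polynomial structural equation model
`x = Λ_x ξ + δ`, `y = Λ_y (f(ξ) + ζ) + ε` with centered Gaussian `ξ`, square-integrable
centered errors `δ, ζ, ε`, mutual independence of `ξ, δ, ζ, ε`, and polynomial map `f`,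
the cross block of second moments is `E(yx') = Λ_y E(f(ξ)ξ') Λ_x'` entrywise. -/
theorem cross_moment_polynomial_sem {Ω : Type*} [MeasurableSpace Ω]
    (μ : Measure Ω) [IsProbabilityMeasure μ] {k l m₁ m₂ : ℕ}
    (ξ : Ω → Fin k → ℝ) (δ : Ω → Fin m₁ → ℝ) (ζ : Ω → Fin l → ℝ) (ε : Ω → Fin m₂ → ℝ)
    (hξ : IsCenteredGaussian μ ξ)
    (hδmeas : Measurable δ) (hζmeas : Measurable ζ) (hεmeas : Measurable ε)
    (hδ2 : ∀ a, MemLp (fun ω => δ ω a) 2 μ) (hδ0 : ∀ a, ∫ ω, δ ω a ∂μ = 0)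
    (hζ2 : ∀ a, MemLp (fun ω => ζ ω a) 2 μ) (hζ0 : ∀ a, ∫ ω, ζ ω a ∂μ = 0)
    (hε2 : ∀ a, MemLp (fun ω => ε ω a) 2 μ) (hε0 : ∀ a, ∫ ω, ε ω a ∂μ = 0)
    (hIndep : iIndepFun (β := fun i : Fin 4 => Fin (![k, m₁, l, m₂] i) → ℝ)
      (m := fun _ => inferInstance)
      (Fin.cons ξ (Fin.cons δ (Fin.cons ζ (Fin.cons ε finZeroElim)))) μ)
    (f : Fin l → MvPolynomial (Fin k) ℝ)
    (Λx : Matrix (Fin m₁) (Fin k) ℝ) (Λy : Matrix (Fin m₂) (Fin l) ℝ)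
    (x : Ω → Fin m₁ → ℝ) (hx : ∀ ω j, x ω j = (∑ a, Λx j a * ξ ω a) + δ ω j)
    (y : Ω → Fin m₂ → ℝ)
    (hy : ∀ ω i, y ω i =
      (∑ a, Λy i a * (MvPolynomial.eval (ξ ω) (f a) + ζ ω a)) + ε ω i) :
    ∀ i j, ∫ ω, y ω i * x ω j ∂μ =
      (Λy * (Matrix.of fun a b => ∫ ω, MvPolynomial.eval (ξ ω) (f a) * ξ ω b ∂μ)
        * Λx.transpose) i j := by
  classical
  intro i j
  -- measurability of components
  have hco : ∀ b : Fin k, Measurable fun ω => ξ ω b := fun b =>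
    (measurable_pi_apply b).comp hξ.1
  have mpoly : ∀ P : MvPolynomial (Fin k) ℝ,
      Measurable fun v : Fin k → ℝ => MvPolynomial.eval v P := fun P =>
    (MvPolynomial.continuous_eval (p := P)).measurable
  -- integrability of polynomial functionals of ξ
  have int_poly : ∀ P : MvPolynomial (Fin k) ℝ,
      Integrable (fun ω => MvPolynomial.eval (ξ ω) P) μ := by
    intro P
    have h := poly_memLp hξ P 1
    rw [Nat.cast_one] at h
    exact h.integrable le_rfl
  have int_fab : ∀ a b,
      Integrable (fun ω => MvPolynomial.eval (ξ ω) (f a) * ξ ω b) μ := by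
    intro a b
    have h := int_poly (f a * MvPolynomial.X b)
    simpa [MvPolynomial.eval_mul] using h
  have int_ξ : ∀ b, Integrable (fun ω => ξ ω b) μ := by
    intro b
    have h := coord_memLp hξ b 1
    rw [Nat.cast_one] at h
    exact h.integrable le_rfl
  have int_g1 : Integrable (fun ω => ∑ a, Λy i a * MvPolynomial.eval (ξ ω) (f a)) μ :=
    integrable_finset_sum _ fun a _ => (int_poly (f a)).const_mul _
  have int_u : Integrable (fun ω => ∑ b, Λx j b * ξ ω b) μ :=
    integrable_finset_sum _ fun b _ => (int_ξ b).const_mul _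
  have int_g2 : Integrable (fun ω => ∑ a, Λy i a * ζ ω a) μ :=
    integrable_finset_sum _ fun a _ => ((hζ2 a).integrable one_le_two).const_mul _
  have int_dj : Integrable (fun ω => δ ω j) μ := (hδ2 j).integrable one_le_two
  have int_ei : Integrable (fun ω => ε ω i) μ := (hε2 i).integrable one_le_two
  -- pairwise independence
  have hξδ : IndepFun ξ δ μ := hIndep.indepFun (show (0 : Fin 4) ≠ 1 by decide)
  have hζξ : IndepFun ζ ξ μ := hIndep.indepFun (show (2 : Fin 4) ≠ 0 by decide)
  have hζδ : IndepFun ζ δ μ := hIndep.indepFun (show (2 : Fin 4) ≠ 1 by decide)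
  have hεξ : IndepFun ε ξ μ := hIndep.indepFun (show (3 : Fin 4) ≠ 0 by decide)
  have hεδ : IndepFun ε δ μ := hIndep.indepFun (show (3 : Fin 4) ≠ 1 by decide)
  have mφ1 : Measurable fun v : Fin k → ℝ => ∑ a, Λy i a * MvPolynomial.eval v (f a) :=
    Finset.measurable_sum _ fun a _ => (mpoly (f a)).const_mul _
  have mu : Measurable fun v : Fin k → ℝ => ∑ b, Λx j b * v b :=
    Finset.measurable_sum _ fun b _ => (measurable_pi_apply b).const_mul _
  have mφ2 : Measurable fun v : Fin l → ℝ => ∑ a, Λy i a * v a :=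
    Finset.measurable_sum _ fun a _ => (measurable_pi_apply a).const_mul _
  have I2 : IndepFun (fun ω => ∑ a, Λy i a * MvPolynomial.eval (ξ ω) (f a))
      (fun ω => δ ω j) μ := hξδ.comp mφ1 (measurable_pi_apply j)
  have I3 : IndepFun (fun ω => ∑ a, Λy i a * ζ ω a)
      (fun ω => ∑ b, Λx j b * ξ ω b) μ := hζξ.comp mφ2 mu
  have I4 : IndepFun (fun ω => ∑ a, Λy i a * ζ ω a) (fun ω => δ ω j) μ :=
    hζδ.comp mφ2 (measurable_pi_apply j)
  have I5 : IndepFun (fun ω => ε ω i) (fun ω => ∑ b, Λx j b * ξ ω b) μ :=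
    hεξ.comp (measurable_pi_apply i) mu
  have I6 : IndepFun (fun ω => ε ω i) (fun ω => δ ω j) μ :=
    hεδ.comp (measurable_pi_apply i) (measurable_pi_apply j)
  -- integrability of the cross products
  have int2 : Integrable (fun ω =>
      (∑ a, Λy i a * MvPolynomial.eval (ξ ω) (f a)) * δ ω j) μ :=
    I2.integrable_mul int_g1 int_dj
  have int3 : Integrable (fun ω =>
      (∑ a, Λy i a * ζ ω a) * (∑ b, Λx j b * ξ ω b)) μ :=
    I3.integrable_mul int_g2 int_u
  have int4 : Integrable (fun ω => (∑ a, Λy i a * ζ ω a) * δ ω j) μ :=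
    I4.integrable_mul int_g2 int_dj
  have int5 : Integrable (fun ω => ε ω i * (∑ b, Λx j b * ξ ω b)) μ :=
    I5.integrable_mul int_ei int_u
  have int6 : Integrable (fun ω => ε ω i * δ ω j) μ :=
    I6.integrable_mul int_ei int_dj
  -- main term pointwise expansion
  have hpt : ∀ ω, (∑ a, Λy i a * MvPolynomial.eval (ξ ω) (f a)) * (∑ b, Λx j b * ξ ω b)
      = ∑ a, ∑ b, Λy i a * Λx j b * (MvPolynomial.eval (ξ ω) (f a) * ξ ω b) := by
    intro ω
    rw [Finset.sum_mul_sum]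
    exact Finset.sum_congr rfl fun a _ => Finset.sum_congr rfl fun b _ => by ring
  have int_g1u : Integrable (fun ω =>
      (∑ a, Λy i a * MvPolynomial.eval (ξ ω) (f a)) * (∑ b, Λx j b * ξ ω b)) μ := by
    have h : Integrable (fun ω =>
        ∑ a, ∑ b, Λy i a * Λx j b * (MvPolynomial.eval (ξ ω) (f a) * ξ ω b)) μ :=
      integrable_finset_sum _ fun a _ => integrable_finset_sum _ fun b _ =>
        (int_fab a b).const_mul _
    exact h.congr (Filter.Eventually.of_forall fun ω => (hpt ω).symm)
  -- vanishing of the cross terms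
  have hg2mean : ∫ ω, ∑ a, Λy i a * ζ ω a ∂μ = 0 := by
    rw [integral_finset_sum _ fun a _ => ((hζ2 a).integrable one_le_two).const_mul _]
    simp [integral_const_mul, hζ0]
  have e2 : ∫ ω, (∑ a, Λy i a * MvPolynomial.eval (ξ ω) (f a)) * δ ω j ∂μ = 0 := by
    have h : ∫ ω, (∑ a, Λy i a * MvPolynomial.eval (ξ ω) (f a)) * δ ω j ∂μ
        = (∫ ω, ∑ a, Λy i a * MvPolynomial.eval (ξ ω) (f a) ∂μ) * ∫ ω, δ ω j ∂μ :=
      I2.integral_fun_mul_eq_mul_integral int_g1.1 int_dj.1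
    rw [h, hδ0 j, mul_zero]
  have e3 : ∫ ω, (∑ a, Λy i a * ζ ω a) * (∑ b, Λx j b * ξ ω b) ∂μ = 0 := by
    have h : ∫ ω, (∑ a, Λy i a * ζ ω a) * (∑ b, Λx j b * ξ ω b) ∂μ
        = (∫ ω, ∑ a, Λy i a * ζ ω a ∂μ) * ∫ ω, ∑ b, Λx j b * ξ ω b ∂μ :=
      I3.integral_fun_mul_eq_mul_integral int_g2.1 int_u.1
    rw [h, hg2mean, zero_mul]
  have e4 : ∫ ω, (∑ a, Λy i a * ζ ω a) * δ ω j ∂μ = 0 := by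
    have h : ∫ ω, (∑ a, Λy i a * ζ ω a) * δ ω j ∂μ
        = (∫ ω, ∑ a, Λy i a * ζ ω a ∂μ) * ∫ ω, δ ω j ∂μ :=
      I4.integral_fun_mul_eq_mul_integral int_g2.1 int_dj.1
    rw [h, hg2mean, zero_mul]
  have e5 : ∫ ω, ε ω i * (∑ b, Λx j b * ξ ω b) ∂μ = 0 := by
    have h : ∫ ω, ε ω i * (∑ b, Λx j b * ξ ω b) ∂μ
        = (∫ ω, ε ω i ∂μ) * ∫ ω, ∑ b, Λx j b * ξ ω b ∂μ :=
      I5.integral_fun_mul_eq_mul_integral int_ei.1 int_u.1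
    rw [h, hε0 i, zero_mul]
  have e6 : ∫ ω, ε ω i * δ ω j ∂μ = 0 := by
    have h : ∫ ω, ε ω i * δ ω j ∂μ = (∫ ω, ε ω i ∂μ) * ∫ ω, δ ω j ∂μ :=
      I6.integral_fun_mul_eq_mul_integral int_ei.1 int_dj.1
    rw [h, hε0 i, zero_mul]
  -- value of the main term
  have emain : ∫ ω, (∑ a, Λy i a * MvPolynomial.eval (ξ ω) (f a))
        * (∑ b, Λx j b * ξ ω b) ∂μ
      = ∑ a, ∑ b, Λy i a * Λx j b * ∫ ω, MvPolynomial.eval (ξ ω) (f a) * ξ ω b ∂μ := by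
    rw [show (fun ω => (∑ a, Λy i a * MvPolynomial.eval (ξ ω) (f a))
        * (∑ b, Λx j b * ξ ω b))
        = fun ω => ∑ a, ∑ b, Λy i a * Λx j b * (MvPolynomial.eval (ξ ω) (f a) * ξ ω b)
        from funext hpt]
    rw [integral_finset_sum _ fun a _ => integrable_finset_sum _ fun b _ =>
      (int_fab a b).const_mul _]
    refine Finset.sum_congr rfl fun a _ => ?_
    rw [integral_finset_sum _ fun b _ => (int_fab a b).const_mul _]
    exact Finset.sum_congr rfl fun b _ => integral_const_mul _ _
  -- expand the integrand
  have hsplit : (fun ω => y ω i * x ω j) = fun ω =>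
      (∑ a, Λy i a * MvPolynomial.eval (ξ ω) (f a)) * (∑ b, Λx j b * ξ ω b)
      + ((∑ a, Λy i a * MvPolynomial.eval (ξ ω) (f a)) * δ ω j
      + ((∑ a, Λy i a * ζ ω a) * (∑ b, Λx j b * ξ ω b)
      + ((∑ a, Λy i a * ζ ω a) * δ ω j
      + (ε ω i * (∑ b, Λx j b * ξ ω b)
      + ε ω i * δ ω j)))) := by
    funext ω
    rw [hy, hx]
    have hsum : (∑ a, Λy i a * (MvPolynomial.eval (ξ ω) (f a) + ζ ω a))
        = (∑ a, Λy i a * MvPolynomial.eval (ξ ω) (f a)) + ∑ a, Λy i a * ζ ω a := by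
      rw [← Finset.sum_add_distrib]
      exact Finset.sum_congr rfl fun a _ => by ring
    rw [hsum]
    ring
  have h56 : Integrable (fun ω => ε ω i * (∑ b, Λx j b * ξ ω b) + ε ω i * δ ω j) μ :=
    int5.add int6
  have h456 : Integrable (fun ω => (∑ a, Λy i a * ζ ω a) * δ ω j
      + (ε ω i * (∑ b, Λx j b * ξ ω b) + ε ω i * δ ω j)) μ := int4.add h56
  have h3456 : Integrable (fun ω => (∑ a, Λy i a * ζ ω a) * (∑ b, Λx j b * ξ ω b)
      + ((∑ a, Λy i a * ζ ω a) * δ ω j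
      + (ε ω i * (∑ b, Λx j b * ξ ω b) + ε ω i * δ ω j))) μ := int3.add h456
  have h23456 : Integrable (fun ω =>
      (∑ a, Λy i a * MvPolynomial.eval (ξ ω) (f a)) * δ ω j
      + ((∑ a, Λy i a * ζ ω a) * (∑ b, Λx j b * ξ ω b)
      + ((∑ a, Λy i a * ζ ω a) * δ ω j
      + (ε ω i * (∑ b, Λx j b * ξ ω b) + ε ω i * δ ω j)))) μ := int2.add h3456
  rw [hsplit,
    integral_add int_g1u h23456,
    integral_add int2 h3456,
    integral_add int3 h456,
    integral_add int4 h56,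
    integral_add int5 int6,
    e2, e3, e4, e5, e6, emain]
  simp only [add_zero, Matrix.mul_apply, Matrix.transpose_apply, Matrix.of_apply,
    Finset.sum_mul]
  rw [Finset.sum_comm]
  exact Finset.sum_congr rfl fun b _ => Finset.sum_congr rfl fun a _ => by ring
end
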